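/- Let E be a finite group, χ the character of an irreducible complex representation of E with χ(1) > 1, and suppose χ(g) = 0 for every g ∈ E ∖ Z(E). Let A be an abelian subgroup of E with A ∩ Z(E) = {1}. Then |A| divides χ(1) and the restriction χ|_A equals (χ(1)/|A|) times the regular character of A; in particular the trivial character of A occurs in χ|_A. -/

import Mathlib

open scoped Classical

/-- Hall–Higman–Shult type, Lemma `eg1`: if `χ` is an irreducible complex
character of a finite group `E` of degree `> 1` vanishing outside the center, and `A` is
an abelian subgroup with `A ∩ Z(E) = 1`, then `χ|_A` is `(χ(1)/|A|)` times the regular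
character of `A`; in particular `|A| ∣ χ(1)` and `1_A` occurs in `χ|_A`. -/
theorem stmt_16 {E : Type} [Group E] [Fintype E] (V : FDRep ℂ E)
    (hsimple : CategoryTheory.Simple V) (hdeg : 1 < Module.finrank ℂ V)
    (hvanish : ∀ g : E, g ∉ Subgroup.center E → V.character g = 0)
    (A : Subgroup E) (hA : IsMulCommutative A) (hAZ : A ⊓ Subgroup.center E = ⊥) :
    (∃ k : ℕ, V.character 1 = (k : ℂ) * (Nat.card A : ℂ) ∧
        ∀ a : A, V.character (a : E)
          = (k : ℂ) * (if (a : E) = 1 then (Nat.card A : ℂ) else 0)) ∧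
      ∑ a : A, V.character (a : E) ≠ 0 := by
  -- χ vanishes on A \ {1}
  have hzero : ∀ a : A, (a : E) ≠ 1 → V.character (a : E) = 0 := by
    intro a ha
    by_cases hc : (a : E) ∈ Subgroup.center E
    · exact absurd (by simpa using (hAZ ▸ Subgroup.mem_inf.2 ⟨a.2, hc⟩ :
        (a : E) ∈ (⊥ : Subgroup E))) ha
    · exact hvanish _ hc
  have hsum : ∑ a : A, V.character (a : E) = V.character 1 := by
    rw [Fintype.sum_eq_single (1 : A) (fun a ha => hzero a (fun h => ha (Subtype.ext h)))]
    simp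
  haveI : Invertible (Fintype.card A : ℂ) :=
    invertibleOfNonzero (by exact_mod_cast Fintype.card_ne_zero)
  set W : FDRep ℂ A := FDRep.of (V.ρ.comp A.subtype) with hW
  have hWchar : ∀ a : A, W.character a = V.character (a : E) := fun a => rfl
  have havg := FDRep.average_char_eq_finrank_invariants W
  set k : ℕ := Module.finrank ℂ (Representation.invariants W.ρ) with hk
  have hsum2 : ∑ a : A, V.character (a : E) = (k : ℂ) * (Fintype.card A : ℂ) := by
    have := havg
    simp only [hWchar] at this
    rw [Nat.card_eq_fintype_card, ← invOf_eq_inv] at this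
    have h2 := congrArg (fun x => (Fintype.card A : ℂ) * x) this
    rw [← mul_assoc, mul_invOf_self, one_mul] at h2
    rw [h2, mul_comm]
  have hcard : (Nat.card A : ℂ) = (Fintype.card A : ℂ) := by
    rw [Nat.card_eq_fintype_card]
  have h1 : V.character 1 = (k : ℂ) * (Nat.card A : ℂ) := by
    rw [← hsum, hsum2, hcard]
  refine ⟨⟨k, h1, ?_⟩, ?_⟩
  · intro a
    by_cases ha : (a : E) = 1
    · rw [ha, if_pos rfl, h1]
    · rw [hzero a ha, if_neg ha, mul_zero]
  · rw [hsum, FDRep.char_one]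
    exact_mod_cast (by omega : Module.finrank ℂ V ≠ 0)
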